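/- arXiv:2502.02430 — 2 statements merged into one kernel-verified Lean document; each statement's English description precedes it below -/
import Mathlib

section
/- For every ι > 0 one has ψ(ι) > 0, and the crawl frequency function f defined by f(ι) = 1/ψ(ι) is strictly monotonically decreasing on (0, ∞). -/
open Real Finset

/-- Normalized residual of the `i`-th Taylor approximation of the exponential:
`R_i(x) = (exp x − ∑_{j=0}^{i} x^j/j!) / exp x`. -/
noncomputable def Rres (i : ℕ) (x : ℝ) : ℝ :=
  (Real.exp x - ∑ j ∈ Finset.range (i + 1), x ^ j / (Nat.factorial j : ℝ)) / Real.exp x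

lemma Rres_nonneg (i : ℕ) {x : ℝ} (hx : 0 ≤ x) : 0 ≤ Rres i x := by
  have h := Real.sum_le_exp_of_nonneg hx (i + 1)
  exact div_nonneg (by linarith) (Real.exp_pos x).le

lemma Rres_pos (i : ℕ) {x : ℝ} (hx : 0 < x) : 0 < Rres i x := by
  have h := Real.sum_le_exp_of_nonneg hx.le (i + 2)
  rw [Finset.sum_range_succ] at h
  have hterm : 0 < x ^ (i+1) / ((i+1).factorial : ℝ) := by positivity
  exact div_pos (by linarith) (Real.exp_pos x)

lemma hasDerivAt_psum (n : ℕ) (x : ℝ) :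
    HasDerivAt (fun y => ∑ j ∈ Finset.range (n+1), y ^ j / (Nat.factorial j : ℝ))
      (∑ j ∈ Finset.range n, x ^ j / (Nat.factorial j : ℝ)) x := by
  have h : ∀ j ∈ Finset.range (n+1),
      HasDerivAt (fun y : ℝ => y ^ j / (Nat.factorial j : ℝ))
        ((j : ℝ) * x ^ (j-1) / (Nat.factorial j : ℝ)) x :=
    fun j _ => (hasDerivAt_pow j x).div_const _
  have hsum := HasDerivAt.fun_sum h
  convert hsum using 1
  · rfl
  · rfl
  rw [Finset.sum_range_succ']
  simp only [Nat.cast_zero, Nat.factorial_zero, Nat.cast_one]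
  have : ∀ i : ℕ, ((i:ℝ)+1) * x ^ i / (Nat.factorial (i+1) : ℝ)
      = x ^ i / (Nat.factorial i : ℝ) := by
    intro i
    rw [Nat.factorial_succ]
    push_cast
    have : (Nat.factorial i : ℝ) ≠ 0 := Nat.cast_ne_zero.2 (Nat.factorial_ne_zero i)
    field_simp
  simp [this]

lemma Rres_eq (i : ℕ) (x : ℝ) :
    Rres i x = 1 - (∑ j ∈ Finset.range (i+1), x ^ j / (Nat.factorial j : ℝ)) * Real.exp (-x) := by
  unfold Rres
  rw [Real.exp_neg]
  field_simp

lemma hasDerivAt_Rres (i : ℕ) (x : ℝ) :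
    HasDerivAt (Rres i) (x ^ i / (Nat.factorial i : ℝ) * Real.exp (-x)) x := by
  have hS := hasDerivAt_psum i x
  have hE : HasDerivAt (fun y : ℝ => Real.exp (-y)) (-Real.exp (-x)) x := by
    simpa using (hasDerivAt_neg x).exp
  have h := (hasDerivAt_const x (1:ℝ)).fun_sub (hS.fun_mul hE)
  have hfun : (fun y => 1 - (∑ j ∈ Finset.range (i+1), y ^ j / (Nat.factorial j : ℝ))
      * Real.exp (-y)) = Rres i := by
    funext y; rw [Rres_eq]
  rw [hfun] at h
  convert h using 1
  · rfl
  · rfl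
  rw [Finset.sum_range_succ]
  ring

lemma Rres_strictMonoOn (i : ℕ) : StrictMonoOn (Rres i) (Set.Ici 0) := by
  apply strictMonoOn_of_deriv_pos (convex_Ici 0)
  · exact fun x _ => ((hasDerivAt_Rres i x).differentiableAt).continuousAt.continuousWithinAt
  · intro x hx
    rw [interior_Ici] at hx
    rw [(hasDerivAt_Rres i x).deriv]
    have : (0:ℝ) < x := hx
    positivity

/-- Expected crawl-interval length `ψ(ι) = ∑_{i=0}^{⌊ι/β⌋} (1/γ)·R_i(γ(ι − iβ))`. -/
noncomputable def psi (γ β : ℝ) (ι : ℝ) : ℝ :=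
  ∑ i ∈ Finset.range (⌊ι / β⌋₊ + 1), (1 / γ) * Rres i (γ * (ι - (i : ℝ) * β))

lemma arg_nonneg {β ι : ℝ} (hβ : 0 < β) (hι : 0 ≤ ι) {i : ℕ} (hi : i ≤ ⌊ι / β⌋₊) :
    0 ≤ ι - (i : ℝ) * β := by
  have h1 : (i : ℝ) ≤ ι / β := (Nat.le_floor_iff (by positivity)).1 hi
  have h2 : (i : ℝ) * β ≤ ι := by
    rw [div_eq_mul_inv] at h1
    calc (i:ℝ) * β ≤ (ι * β⁻¹) * β := by nlinarith
    _ = ι := by field_simp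
  linarith

lemma psi_pos (γ β : ℝ) (hγ : 0 < γ) (hβ : 0 < β) {ι : ℝ} (hι : 0 < ι) : 0 < psi γ β ι := by
  unfold psi
  apply Finset.sum_pos'
  · intro i hi
    have h0 : 0 ≤ ι - (i : ℝ) * β :=
      arg_nonneg hβ hι.le (Nat.lt_succ_iff.1 (Finset.mem_range.1 hi))
    exact mul_nonneg (by positivity) (Rres_nonneg i (by positivity))
  · refine ⟨0, Finset.mem_range.2 (Nat.succ_pos _), ?_⟩
    have : 0 < Rres 0 (γ * (ι - (0:ℕ) * β)) := Rres_pos 0 (by push_cast; nlinarith)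
    positivity

lemma psi_strictMonoOn (γ β : ℝ) (hγ : 0 < γ) (hβ : 0 < β) :
    StrictMonoOn (psi γ β) (Set.Ioi 0) := by
  intro a ha b hb hab
  have ha' : (0:ℝ) < a := ha
  have hb' : (0:ℝ) < b := hb
  have hfloor : ⌊a / β⌋₊ ≤ ⌊b / β⌋₊ := by
    apply Nat.floor_mono
    gcongr
  have step1 : psi γ β a < ∑ i ∈ Finset.range (⌊a / β⌋₊ + 1),
      (1 / γ) * Rres i (γ * (b - (i : ℝ) * β)) := by
    unfold psi
    apply Finset.sum_lt_sum_of_nonempty (by simp)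
    intro i hi
    have hia : i ≤ ⌊a / β⌋₊ := Nat.lt_succ_iff.1 (Finset.mem_range.1 hi)
    have h0 : 0 ≤ a - (i : ℝ) * β := arg_nonneg hβ ha'.le hia
    have hxa : (0:ℝ) ≤ γ * (a - (i : ℝ) * β) := by positivity
    have hxb : γ * (a - (i : ℝ) * β) < γ * (b - (i : ℝ) * β) := by nlinarith
    have := Rres_strictMonoOn i hxa (le_trans hxa hxb.le) hxb
    exact mul_lt_mul_of_pos_left this (by positivity)
  have step2 : ∑ i ∈ Finset.range (⌊a / β⌋₊ + 1),
      (1 / γ) * Rres i (γ * (b - (i : ℝ) * β)) ≤ psi γ β b := by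
    unfold psi
    apply Finset.sum_le_sum_of_subset_of_nonneg
    · exact Finset.range_subset_range.2 (by omega)
    · intro i hi _
      have hib : i ≤ ⌊b / β⌋₊ := Nat.lt_succ_iff.1 (Finset.mem_range.1 hi)
      have h0 : 0 ≤ b - (i : ℝ) * β := arg_nonneg hβ hb'.le hib
      exact mul_nonneg (by positivity) (Rres_nonneg i (by positivity))
  linarith

/-- For every `ι > 0`, `ψ(ι) > 0`, and the crawl frequency function `f(ι) = 1/ψ(ι)` is
strictly monotonically decreasing on `(0, ∞)`. -/
theorem stmt_6 (γ β : ℝ) (hγ : 0 < γ) (hβ : 0 < β) :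
    (∀ ι : ℝ, 0 < ι → 0 < psi γ β ι) ∧
    StrictAntiOn (fun ι => 1 / psi γ β ι) (Set.Ioi (0 : ℝ)) := by
  constructor
  · exact fun ι hι => psi_pos γ β hγ hβ hι
  · intro a ha b hb hab
    have h1 : 0 < psi γ β a := psi_pos γ β hγ hβ ha
    have h2 : psi γ β a < psi γ β b := psi_strictMonoOn γ β hγ hβ ha hb hab
    exact one_div_lt_one_div_of_lt h1 h2
end

section
/- For every integer i ≥ 1 and every real ι with iβ < ι ≤ (i+1)β, the function ψ satisfies the renewal identity ψ(ι) = ∫_0^{ι−iβ} γ·exp(−γs)·(s + ψ(ι − β − s)) ds + exp(−γ(ι − iβ))·(ι − iβ + ψ(iβ)). -/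
open Real Finset

noncomputable def Eg (m : ℕ) (y : ℝ) : ℝ :=
  Real.exp (-y) * ∑ j ∈ Finset.range (m + 1), y ^ j / (Nat.factorial j : ℝ)

lemma Rres_eq_s13 (m : ℕ) (x : ℝ) : Rres m x = 1 - Eg m x := by
  unfold Rres Eg
  rw [Real.exp_neg]
  field_simp

lemma Rres_zero (m : ℕ) : Rres m 0 = 0 := by
  rw [Rres_eq_s13]
  unfold Eg
  rw [Finset.sum_eq_single 0]
  · norm_num
  · intro j _ hj; simp [zero_pow hj]
  · intro h; simp at h

lemma Rres_zero' (x : ℝ) : Rres 0 x = 1 - Real.exp (-x) := by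
  rw [Rres_eq_s13]; unfold Eg; norm_num

lemma Rres_succ (m : ℕ) (y : ℝ) :
    Rres m y = Rres (m+1) y + Real.exp (-y) * y^(m+1) / (Nat.factorial (m+1) : ℝ) := by
  rw [Rres_eq_s13, Rres_eq_s13]
  unfold Eg
  rw [Finset.sum_range_succ (fun j => y^j / (Nat.factorial j : ℝ)) (m+1)]
  ring

lemma sum_deriv (m : ℕ) (y : ℝ) :
    ∑ j ∈ Finset.range (m+1), (j:ℝ) * y^(j-1) / (Nat.factorial j : ℝ)
      = (∑ j ∈ Finset.range (m+1), y^j / (Nat.factorial j : ℝ)) - y^m / (Nat.factorial m : ℝ) := by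
  induction m with
  | zero => simp
  | succ m ih =>
    rw [Finset.sum_range_succ, ih,
      Finset.sum_range_succ (fun j => y^j / (Nat.factorial j : ℝ)) (m+1)]
    have h : ((m+1:ℕ):ℝ) * y^((m+1)-1) / (Nat.factorial (m+1) : ℝ)
        = y^m / (Nat.factorial m : ℝ) := by
      rw [Nat.factorial_succ, Nat.add_sub_cancel]
      push_cast
      field_simp
    push_cast at h ⊢
    linarith [h]

lemma hasDerivAt_Eg (m : ℕ) (y : ℝ) :
    HasDerivAt (Eg m) (-(Real.exp (-y) * y^m / (Nat.factorial m : ℝ))) y := by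
  have h1 : HasDerivAt (fun y : ℝ => Real.exp (-y)) (-Real.exp (-y)) y := by
    simpa using (hasDerivAt_neg y).exp
  have h2 : HasDerivAt (fun y : ℝ => ∑ j ∈ Finset.range (m+1), y^j / (Nat.factorial j : ℝ))
      (∑ j ∈ Finset.range (m+1), (j:ℝ) * y^(j-1) / (Nat.factorial j : ℝ)) y :=
    HasDerivAt.fun_sum fun j _ => (hasDerivAt_pow j y).div_const _
  have h := h1.mul h2
  have heq : Eg m = fun y : ℝ =>
      Real.exp (-y) * ∑ j ∈ Finset.range (m+1), y^j / (Nat.factorial j : ℝ) := rfl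
  rw [heq]
  refine h.congr_deriv ?_
  rw [sum_deriv]
  ring

lemma hasDerivAt_Rres_comp (m : ℕ) (γ c : ℝ) (s : ℝ) :
    HasDerivAt (fun t => Rres m (γ * (c - t)))
      (-(γ * Real.exp (-(γ * (c - s))) * (γ * (c - s))^m / (Nat.factorial m : ℝ))) s := by
  have hinner : HasDerivAt (fun t : ℝ => γ * (c - t)) (γ * (-1)) s :=
    ((hasDerivAt_id s).const_sub c).const_mul γ
  have h := (hasDerivAt_Eg m (γ * (c - s))).comp s hinner
  have h' : HasDerivAt (fun t : ℝ => Eg m (γ * (c - t)))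
      (-(Real.exp (-(γ * (c - s))) * (γ * (c - s))^m / (Nat.factorial m : ℝ)) * (γ * (-1))) s := by
    exact h
  have h2 := h'.const_sub 1
  have heq : (fun t => Rres m (γ * (c - t))) = fun t : ℝ => 1 - Eg m (γ * (c - t)) :=
    funext fun t => Rres_eq_s13 m _
  rw [heq]
  refine h2.congr_deriv ?_
  ring

lemma psi_eq (γ β : ℝ) (hβ : 0 < β) (m : ℕ) (x : ℝ)
    (h1 : (m:ℝ) * β ≤ x) (h2 : x ≤ ((m:ℝ) + 1) * β) :
    psi γ β x = ∑ k ∈ Finset.range (m+1), 1/γ * Rres k (γ * (x - (k:ℝ) * β)) := by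
  have hx0 : (0:ℝ) ≤ x := le_trans (by positivity) h1
  have hfl : (m:ℝ) ≤ x / β := (le_div_iff₀ hβ).2 (by linarith)
  have hfl2 : x / β ≤ (m:ℝ) + 1 := (div_le_iff₀ hβ).2 (by linarith)
  have h1' : m ≤ ⌊x / β⌋₊ := Nat.le_floor hfl
  have h2' : ⌊x / β⌋₊ ≤ m + 1 := by
    calc ⌊x / β⌋₊ ≤ ⌊((m+1 : ℕ) : ℝ)⌋₊ := Nat.floor_le_floor (by push_cast; linarith)
    _ = m + 1 := Nat.floor_natCast _
  have hcase : ⌊x / β⌋₊ = m ∨ ⌊x / β⌋₊ = m + 1 := by omega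
  rcases hcase with h | h
  · unfold psi
    rw [h]
  · have hge : ((m:ℝ) + 1) ≤ x / β := by
      have := Nat.floor_le (by positivity : (0:ℝ) ≤ x / β)
      rw [h] at this
      push_cast at this
      linarith
    have hx : x = ((m:ℝ) + 1) * β := le_antisymm h2 ((le_div_iff₀ hβ).1 hge)
    unfold psi
    rw [h, Finset.sum_range_succ]
    have hz : γ * (x - ((m+1:ℕ):ℝ) * β) = 0 := by push_cast; rw [hx]; ring
    rw [hz, Rres_zero, mul_zero, add_zero]

/-- For every integer `i ≥ 1` and every real `ι` with `iβ < ι ≤ (i+1)β`, the function `ψ`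
satisfies the renewal identity
`ψ(ι) = ∫_0^{ι−iβ} γ·exp(−γs)·(s + ψ(ι − β − s)) ds + exp(−γ(ι − iβ))·(ι − iβ + ψ(iβ))`. -/
theorem stmt_13 (γ β : ℝ) (hγ : 0 < γ) (hβ : 0 < β) (i : ℕ) (hi : 1 ≤ i) (ι : ℝ)
    (hlo : (i : ℝ) * β < ι) (hhi : ι ≤ ((i : ℝ) + 1) * β) :
    psi γ β ι =
      (∫ s in (0 : ℝ)..(ι - (i : ℝ) * β),
        γ * Real.exp (-(γ * s)) * (s + psi γ β (ι - β - s))) +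
      Real.exp (-(γ * (ι - (i : ℝ) * β))) * (ι - (i : ℝ) * β + psi γ β ((i : ℝ) * β)) := by
  obtain ⟨n, rfl⟩ : ∃ n, i = n + 1 := ⟨i - 1, by omega⟩
  have hγ' : γ ≠ 0 := ne_of_gt hγ
  have hc : ((n+1:ℕ):ℝ) = (n:ℝ) + 1 := by push_cast; ring
  have hT0 : (0:ℝ) < ι - ((n+1:ℕ):ℝ) * β := by linarith
  have hTβ : ι - ((n+1:ℕ):ℝ) * β ≤ β := by
    have hexp : (((n+1:ℕ):ℝ) + 1) * β = ((n+1:ℕ):ℝ) * β + β := by ring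
    linarith [hhi, hexp]
  -- rewrite psi ι
  have hψ1 : psi γ β ι = ∑ k ∈ Finset.range (n+1+1), 1/γ * Rres k (γ * (ι - (k:ℝ) * β)) :=
    psi_eq γ β hβ (n+1) ι hlo.le hhi
  have hψ2 : psi γ β (((n+1:ℕ):ℝ) * β)
      = ∑ k ∈ Finset.range (n+1+1), 1/γ * Rres k (γ * (((n+1:ℕ):ℝ) * β - (k:ℝ) * β)) :=
    psi_eq γ β hβ (n+1) _ le_rfl (by nlinarith)
  -- rewrite the integrand
  have hcongr : Set.EqOn
      (fun s => γ * Real.exp (-(γ * s)) * (s + psi γ β (ι - β - s)))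
      (fun s => γ * Real.exp (-(γ * s)) *
        (s + ∑ k ∈ Finset.range (n+1), 1/γ * Rres k (γ * (ι - β - (k:ℝ) * β - s))))
      (Set.uIcc 0 (ι - ((n+1:ℕ):ℝ) * β)) := by
    intro s hs
    rw [Set.uIcc_of_le hT0.le] at hs
    obtain ⟨hs0, hsT⟩ := hs
    simp only
    have h1 : psi γ β (ι - β - s)
        = ∑ k ∈ Finset.range (n+1), 1/γ * Rres k (γ * ((ι - β - s) - (k:ℝ) * β)) := by
      refine psi_eq γ β hβ n _ ?_ ?_
      · rw [hc] at hsT; linarith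
      · push_cast at hhi hsT ⊢; linarith
    have h2 : ∑ k ∈ Finset.range (n+1), 1/γ * Rres k (γ * ((ι - β - s) - (k:ℝ) * β))
        = ∑ k ∈ Finset.range (n+1), 1/γ * Rres k (γ * (ι - β - (k:ℝ) * β - s)) :=
      Finset.sum_congr rfl fun k _ => by
        rw [show γ * ((ι - β - s) - (k:ℝ) * β) = γ * (ι - β - (k:ℝ) * β - s) from by ring]
    rw [h1, h2]
  rw [hψ1, hψ2, intervalIntegral.integral_congr hcongr]
  -- FTC
  have key : ∀ s ∈ Set.uIcc (0:ℝ) (ι - ((n+1:ℕ):ℝ) * β),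
      HasDerivAt (fun s => -(Real.exp (-(γ * s)) * (s + 1/γ +
          ∑ k ∈ Finset.range (n+1), 1/γ * Rres (k+1) (γ * (ι - β - (k:ℝ) * β - s)))))
        (γ * Real.exp (-(γ * s)) *
          (s + ∑ k ∈ Finset.range (n+1), 1/γ * Rres k (γ * (ι - β - (k:ℝ) * β - s)))) s := by
    intro s _
    have hA : HasDerivAt (fun s : ℝ => Real.exp (-(γ * s))) (-(γ * Real.exp (-(γ * s)))) s := by
      have h := (((hasDerivAt_id s).const_mul γ).neg).exp
      refine h.congr_deriv ?_
      simp only [Pi.neg_apply, id_eq, mul_one]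
      ring
    have hB : HasDerivAt (fun s : ℝ => s + 1/γ +
          ∑ k ∈ Finset.range (n+1), 1/γ * Rres (k+1) (γ * (ι - β - (k:ℝ) * β - s)))
        (1 + ∑ k ∈ Finset.range (n+1), 1/γ *
          (-(γ * Real.exp (-(γ * (ι - β - (k:ℝ) * β - s))) *
            (γ * (ι - β - (k:ℝ) * β - s))^(k+1) / (Nat.factorial (k+1) : ℝ)))) s := by
      have h := (((hasDerivAt_id s).add_const (1/γ)).add
        (HasDerivAt.fun_sum (u := Finset.range (n+1)) fun k _ =>
          (hasDerivAt_Rres_comp (k+1) γ (ι - β - (k:ℝ) * β) s).const_mul (1/γ)))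
      exact h
    have hH := (hA.mul hB).neg
    refine hH.congr_deriv ?_
    have hS0 : ∑ k ∈ Finset.range (n+1), 1/γ * Rres k (γ * (ι - β - (k:ℝ) * β - s))
        = (∑ k ∈ Finset.range (n+1), 1/γ * Rres (k+1) (γ * (ι - β - (k:ℝ) * β - s)))
          + ∑ k ∈ Finset.range (n+1), 1/γ *
            (Real.exp (-(γ * (ι - β - (k:ℝ) * β - s))) *
              (γ * (ι - β - (k:ℝ) * β - s))^(k+1) / (Nat.factorial (k+1) : ℝ)) := by
      rw [← Finset.sum_add_distrib]
      refine Finset.sum_congr rfl fun k _ => ?_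
      rw [Rres_succ k (γ * (ι - β - (k:ℝ) * β - s))]
      ring
    have hS2 : ∑ k ∈ Finset.range (n+1), 1/γ *
          (-(γ * Real.exp (-(γ * (ι - β - (k:ℝ) * β - s))) *
            (γ * (ι - β - (k:ℝ) * β - s))^(k+1) / (Nat.factorial (k+1) : ℝ)))
        = -(γ * ∑ k ∈ Finset.range (n+1), 1/γ *
            (Real.exp (-(γ * (ι - β - (k:ℝ) * β - s))) *
              (γ * (ι - β - (k:ℝ) * β - s))^(k+1) / (Nat.factorial (k+1) : ℝ))) := by
      rw [Finset.mul_sum, ← Finset.sum_neg_distrib]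
      exact Finset.sum_congr rfl fun k _ => by ring
    rw [hS0, hS2]
    field_simp
    ring
  have hcont : Continuous (fun s : ℝ => γ * Real.exp (-(γ * s)) *
      (s + ∑ k ∈ Finset.range (n+1), 1/γ * Rres k (γ * (ι - β - (k:ℝ) * β - s)))) := by
    have hR : ∀ m : ℕ, Continuous (Rres m) := by
      intro m
      unfold Rres
      exact ((Real.continuous_exp.sub
        (continuous_finset_sum _ fun j _ => (continuous_pow j).div_const _)).div
        Real.continuous_exp fun x => (Real.exp_pos x).ne')
    apply Continuous.mul
    · exact continuous_const.mul (Real.continuous_exp.comp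
        ((continuous_const.mul continuous_id).neg))
    · refine continuous_id.add (continuous_finset_sum _ fun k _ => ?_)
      exact continuous_const.mul ((hR k).comp
        (continuous_const.mul ((continuous_const.sub continuous_id))))
  have hint := intervalIntegral.integral_eq_sub_of_hasDerivAt key
    (hcont.intervalIntegrable 0 (ι - ((n+1:ℕ):ℝ) * β))
  rw [hint]
  -- final algebra
  have e1 : ∑ k ∈ Finset.range (n+1+1), 1/γ * Rres k (γ * (ι - (k:ℝ) * β))
      = (∑ k ∈ Finset.range (n+1), 1/γ * Rres (k+1) (γ * (ι - β - (k:ℝ) * β - 0)))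
        + 1/γ * Rres 0 (γ * (ι - ((0:ℕ):ℝ) * β)) := by
    rw [Finset.sum_range_succ']
    congr 1
    refine Finset.sum_congr rfl fun k _ => ?_
    rw [show γ * (ι - ((k+1:ℕ):ℝ) * β) = γ * (ι - β - (k:ℝ) * β - 0) from by push_cast; ring]
  have e2 : ∑ k ∈ Finset.range (n+1+1), 1/γ * Rres k (γ * (((n+1:ℕ):ℝ) * β - (k:ℝ) * β))
      = (∑ k ∈ Finset.range (n+1), 1/γ * Rres (k+1)
          (γ * (ι - β - (k:ℝ) * β - (ι - ((n+1:ℕ):ℝ) * β))))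
        + 1/γ * Rres 0 (γ * (((n+1:ℕ):ℝ) * β - ((0:ℕ):ℝ) * β)) := by
    rw [Finset.sum_range_succ']
    congr 1
    refine Finset.sum_congr rfl fun k _ => ?_
    rw [show γ * (((n+1:ℕ):ℝ) * β - ((k+1:ℕ):ℝ) * β)
        = γ * (ι - β - (k:ℝ) * β - (ι - ((n+1:ℕ):ℝ) * β)) from by push_cast; ring]
  rw [e1, e2, Rres_zero', Rres_zero']
  have eexp : Real.exp (-(γ * (ι - ((0:ℕ):ℝ) * β)))
      = Real.exp (-(γ * (ι - ((n+1:ℕ):ℝ) * β)))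
        * Real.exp (-(γ * (((n+1:ℕ):ℝ) * β - ((0:ℕ):ℝ) * β))) := by
    rw [← Real.exp_add]
    congr 1
    ring
  rw [eexp]
  simp only [mul_zero, sub_zero, Real.exp_zero, neg_zero]
  ring
end
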